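/- The Borel conjecture for strong measure zero sets is equivalent to the Borel conjecture for Rothberger sets: every strong measure zero set of reals is countable if and only if every set of reals with the Rothberger property C'' is countable. -/

import Mathlib

/-- X ⊆ ℝ has strong measure zero: for every sequence of positive reals ε_n there are
intervals I_n of length < ε_n covering X. -/
def SMZ (X : Set ℝ) : Prop :=
  ∀ ε : ℕ → ℝ, (∀ n, 0 < ε n) →
    ∃ I : ℕ → Set ℝ, (∀ n, ∃ a b : ℝ, I n = Set.Ioo a b ∧ b - a < ε n) ∧ X ⊆ ⋃ n, I n

/-- X ⊆ ℝ has the Rothberger property C''. -/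
def Rothberger (X : Set ℝ) : Prop :=
  ∀ 𝒰 : ℕ → Set (Set ℝ), (∀ n, (∀ U ∈ 𝒰 n, IsOpen U) ∧ X ⊆ ⋃₀ 𝒰 n) →
    ∃ U : ℕ → Set ℝ, (∀ n, U n ∈ 𝒰 n) ∧ X ⊆ ⋃ n, U n


open Set Cardinal




/-- eventual domination -/
def LeS (f g : ℕ → ℕ) : Prop := ∃ N, ∀ n ≥ N, f n ≤ g n
def LtS (f g : ℕ → ℕ) : Prop := ∃ N, ∀ n ≥ N, f n < g n

theorem LtS.leS {f g : ℕ → ℕ} (h : LtS f g) : LeS f g := by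
  obtain ⟨N, hN⟩ := h; exact ⟨N, fun n hn => (hN n hn).le⟩

theorem LeS.trans {f g h : ℕ → ℕ} (h1 : LeS f g) (h2 : LeS g h) : LeS f h := by
  obtain ⟨N1, hN1⟩ := h1; obtain ⟨N2, hN2⟩ := h2
  exact ⟨max N1 N2, fun n hn => le_trans (hN1 n (le_trans (le_max_left _ _) hn))
    (hN2 n (le_trans (le_max_right _ _) hn))⟩

theorem countable_bound {s : Set (ℕ → ℕ)} (hs : s.Countable) :
    ∃ h : ℕ → ℕ, ∀ f ∈ s, LtS f h := by
  rcases s.eq_empty_or_nonempty with rfl | hne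
  · exact ⟨id, by simp⟩
  obtain ⟨u, hu⟩ := hs.exists_eq_range hne
  refine ⟨fun n => (Finset.range (n+1)).sup (fun i => u i n) + 1, ?_⟩
  intro f hf
  rw [hu] at hf
  obtain ⟨i, rfl⟩ := hf
  refine ⟨i, fun n hn => ?_⟩
  have : u i n ≤ (Finset.range (n+1)).sup (fun j => u j n) :=
    Finset.le_sup (f := fun j => u j n) (Finset.mem_range.2 (Nat.lt_succ_of_le hn))
  exact Nat.lt_succ_of_le this



noncomputable section

def Sf (f : ℕ → ℕ) (m : ℕ) : ℕ := ∑ k ∈ Finset.range m, (f k + 1)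

def term (f : ℕ → ℕ) (n : ℕ) : ℝ := (3:ℝ)⁻¹ ^ (Sf f (n+1))

def ee (f : ℕ → ℕ) : ℝ := ∑' n, term f n

def Pf (f : ℕ → ℕ) (m : ℕ) : ℝ := ∑ n ∈ Finset.range m, term f n

def Tf (f : ℕ → ℕ) (m : ℕ) : ℝ := ∑' n, term f (n + m)

theorem Sf_succ (f : ℕ → ℕ) (m : ℕ) : Sf f (m+1) = Sf f m + f m + 1 := by
  rw [Sf, Finset.sum_range_succ]; rfl

theorem le_Sf (f : ℕ → ℕ) (m : ℕ) : m ≤ Sf f m := by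
  induction m with
  | zero => simp [Sf]
  | succ k ih => rw [Sf_succ]; omega

theorem Sf_add_le (f : ℕ → ℕ) (m n : ℕ) : Sf f (m+1) + n ≤ Sf f (m+n+1) := by
  induction n with
  | zero => simp
  | succ k ih =>
    have h1 := Sf_succ f (m+k+1)
    have h2 : m + (k+1) + 1 = (m + k + 1) + 1 := by ring
    rw [h2, h1]; omega

theorem term_pos (f : ℕ → ℕ) (n : ℕ) : 0 < term f n := by
  apply pow_pos; norm_num

theorem third_pow_le {a b : ℕ} (h : a ≤ b) : (3:ℝ)⁻¹ ^ b ≤ (3:ℝ)⁻¹ ^ a :=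
  pow_le_pow_of_le_one (by norm_num) (by norm_num) h

theorem term_le (f : ℕ → ℕ) (n : ℕ) : term f n ≤ (3:ℝ)⁻¹ ^ (n+1) :=
  third_pow_le (le_Sf f (n+1))

theorem summable_term (f : ℕ → ℕ) : Summable (term f) := by
  apply Summable.of_nonneg_of_le (fun n => (term_pos f n).le) (fun n => term_le f n)
  have h : Summable (fun n : ℕ => (3:ℝ)⁻¹ ^ n) :=
    summable_geometric_of_lt_one (by norm_num) (by norm_num)
  simpa [pow_succ] using h.mul_right 3⁻¹

theorem ee_eq (f : ℕ → ℕ) (m : ℕ) : ee f = Pf f m + Tf f m :=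
  (Summable.sum_add_tsum_nat_add m (summable_term f)).symm

theorem Tf_pos (f : ℕ → ℕ) (m : ℕ) : term f m ≤ Tf f m := by
  have := Summable.le_tsum ((summable_term f).comp_injective (add_left_injective m)) 0
    (fun i _ => (term_pos f (i + m)).le)
  simpa [Tf] using this

theorem Tf_le (f : ℕ → ℕ) (m : ℕ) : Tf f m ≤ (3:ℝ)⁻¹ ^ (Sf f (m+1)) * (3/2) := by
  have hsum : Summable (fun n => term f (n + m)) :=
    (summable_term f).comp_injective (add_left_injective m)
  have hg : Summable (fun n : ℕ => (3:ℝ)⁻¹ ^ (Sf f (m+1)) * (3:ℝ)⁻¹ ^ n) :=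
    (summable_geometric_of_lt_one (by norm_num) (by norm_num)).mul_left _
  have hle : ∀ n : ℕ, term f (n + m) ≤ (3:ℝ)⁻¹ ^ (Sf f (m+1)) * (3:ℝ)⁻¹ ^ n := by
    intro n
    rw [← pow_add]
    have e : n + m + 1 = m + n + 1 := by omega
    unfold term
    rw [e]
    exact third_pow_le (Sf_add_le f m n)
  calc Tf f m ≤ ∑' n : ℕ, (3:ℝ)⁻¹ ^ (Sf f (m+1)) * (3:ℝ)⁻¹ ^ n :=
        Summable.tsum_le_tsum hle hsum hg
    _ = (3:ℝ)⁻¹ ^ (Sf f (m+1)) * (1 - 3⁻¹)⁻¹ := by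
        rw [tsum_mul_left, tsum_geometric_of_lt_one (by norm_num) (by norm_num)]
    _ = (3:ℝ)⁻¹ ^ (Sf f (m+1)) * (3/2) := by norm_num

theorem prefix_congr {f g : ℕ → ℕ} {m : ℕ} (h : ∀ k < m, f k = g k) :
    Pf f m = Pf g m ∧ Sf f m = Sf g m := by
  constructor
  · apply Finset.sum_congr rfl
    intro n hn
    rw [Finset.mem_range] at hn
    unfold term Sf
    congr 1
    apply Finset.sum_congr rfl
    intro k hk
    rw [Finset.mem_range] at hk
    rw [h k (by omega)]
  · apply Finset.sum_congr rfl
    intro k hk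
    rw [Finset.mem_range] at hk
    rw [h k hk]

theorem ee_lt {f g : ℕ → ℕ} {m : ℕ} (h : ∀ k < m, f k = g k) (hm : f m < g m) :
    ee g < ee f := by
  obtain ⟨hP, hS⟩ := prefix_congr h
  rw [ee_eq f m, ee_eq g m, hP]
  have h1 : Sf f (m+1) + 1 ≤ Sf g (m+1) := by
    rw [Sf_succ, Sf_succ, ← hS]; omega
  have h2 : Tf g m ≤ (3:ℝ)⁻¹ ^ (Sf g (m+1)) * (3/2) := Tf_le g m
  have h3 : (3:ℝ)⁻¹ ^ (Sf g (m+1)) * (3/2) ≤ (3:ℝ)⁻¹ ^ (Sf f (m+1) + 1) * (3/2) := by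
    have := third_pow_le h1; nlinarith
  have h4 : (3:ℝ)⁻¹ ^ (Sf f (m+1) + 1) * (3/2) < (3:ℝ)⁻¹ ^ (Sf f (m+1)) := by
    rw [pow_succ]
    have : (0:ℝ) < (3:ℝ)⁻¹ ^ (Sf f (m+1)) := by positivity
    nlinarith
  have h5 : (3:ℝ)⁻¹ ^ (Sf f (m+1)) ≤ Tf f m := Tf_pos f m
  have : Tf g m < Tf f m := by
    calc Tf g m ≤ _ := h2
      _ ≤ _ := h3
      _ < _ := h4
      _ ≤ _ := h5
  linarith

theorem ee_injective : Function.Injective ee := by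
  intro f g hfg
  by_contra hne
  have hex : ∃ m, f m ≠ g m := by
    by_contra h; push_neg at h; exact hne (funext h)
  classical
  let m := Nat.find hex
  have hm : f m ≠ g m := Nat.find_spec hex
  have hlt : ∀ k < m, f k = g k := fun k hk => by
    by_contra hc; exact absurd hk (not_lt.2 (Nat.find_le hc))
  rcases lt_or_gt_of_ne hm with h | h
  · exact ne_of_gt (ee_lt hlt h) hfg
  · have hlt' : ∀ k < m, g k = f k := fun k hk => (hlt k hk).symm
    exact ne_of_gt (ee_lt hlt' h) hfg.symm
def pad (t : List ℕ) : ℕ → ℕ := fun i => t.getD i 0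

def prefixList (f : ℕ → ℕ) (m : ℕ) : List ℕ := List.ofFn (fun i : Fin m => f i)

def Dset : Set ℝ := Set.range (fun t : List ℕ => Pf (pad t) t.length)

theorem length_prefixList (f : ℕ → ℕ) (m : ℕ) : (prefixList f m).length = m := by
  simp [prefixList]

theorem pad_prefixList {f : ℕ → ℕ} {m : ℕ} : ∀ k < m, f k = pad (prefixList f m) k := by
  intro k hk
  have hl : k < (prefixList f m).length := by rw [length_prefixList]; exact hk
  rw [pad, List.getD_eq_getElem _ _ hl]
  simp [prefixList]

theorem Pf_mem_Dset (f : ℕ → ℕ) (m : ℕ) : Pf f m ∈ Dset := by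
  refine ⟨prefixList f m, ?_⟩
  have := prefix_congr (f := pad (prefixList f m)) (g := f) (m := m)
    (fun k hk => (pad_prefixList k hk).symm)
  show Pf (pad (prefixList f m)) (prefixList f m).length = Pf f m
  rw [length_prefixList]
  exact this.1

theorem Dset_countable : Dset.Countable := Set.countable_range _

theorem zero_mem_Dset : (0 : ℝ) ∈ Dset := by
  have := Pf_mem_Dset (fun _ => 0) 0
  simpa [Pf] using this

def TreeA (h : List ℕ → ℕ) : ℕ → Finset (List ℕ)
  | 0 => {[]}
  | (m+1) => (TreeA h m).biUnion fun t => (Finset.range (h t)).image fun k => t.concat k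

theorem prefixList_succ (f : ℕ → ℕ) (m : ℕ) :
    prefixList f (m+1) = (prefixList f m).concat (f m) := by
  rw [prefixList, List.ofFn_succ']
  simp [prefixList]

theorem mem_TreeA {h : List ℕ → ℕ} {f : ℕ → ℕ}
    (hf : ∀ m, f m < h (prefixList f m)) : ∀ m, prefixList f m ∈ TreeA h m := by
  intro m
  induction m with
  | zero => simp [TreeA, prefixList]
  | succ k ih =>
    rw [TreeA, Finset.mem_biUnion]
    refine ⟨prefixList f k, ih, ?_⟩
    rw [Finset.mem_image]
    exact ⟨f k, Finset.mem_range.2 (hf k), (prefixList_succ f k).symm⟩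

theorem conc {U : Set ℝ} (hU : IsOpen U) (hD : Dset ⊆ U) :
    ∃ g : ℕ → ℕ, ∀ f : ℕ → ℕ, ee f ∉ U → ∀ m, f m ≤ g m := by
  classical
  have hδ : ∀ t : List ℕ, ∃ ε : ℝ, 0 < ε ∧ Metric.ball (Pf (pad t) t.length) ε ⊆ U := by
    intro t
    obtain ⟨ε, hε, hb⟩ := Metric.isOpen_iff.1 hU _ (hD (Set.mem_range_self t))
    exact ⟨ε, hε, hb⟩
  choose δ δpos δball using hδ
  have hh : ∀ t : List ℕ, ∃ k : ℕ,
      (3:ℝ)⁻¹ ^ (Sf (pad t) t.length + k + 1) * (3/2) < δ t := by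
    intro t
    obtain ⟨k, hk⟩ := exists_pow_lt_of_lt_one (δpos t) (by norm_num : (3:ℝ)⁻¹ < 1)
    refine ⟨k, ?_⟩
    have h1 : (3:ℝ)⁻¹ ^ (Sf (pad t) t.length + k + 1) ≤ (3:ℝ)⁻¹ ^ (k + 1) :=
      third_pow_le (by omega)
    have h2 : (3:ℝ)⁻¹ ^ (k + 1) = (3:ℝ)⁻¹ ^ k * 3⁻¹ := pow_succ _ _
    have h3 : (0:ℝ) < (3:ℝ)⁻¹ ^ k := by positivity
    nlinarith
  choose h hhspec using hh
  have hkey : ∀ f : ℕ → ℕ, ee f ∉ U → ∀ m, f m < h (prefixList f m) := by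
    intro f hfU m
    by_contra hge
    push_neg at hge
    set t := prefixList f m with ht
    have hlen : t.length = m := length_prefixList f m
    obtain ⟨hP, hS⟩ := prefix_congr (f := f) (g := pad t) (m := m) pad_prefixList
    apply hfU
    apply δball t
    rw [Metric.mem_ball, Real.dist_eq, hlen, ← hP]
    have he : ee f - Pf f m = Tf f m := by rw [ee_eq f m]; ring
    rw [he, abs_of_pos (lt_of_lt_of_le (term_pos f m) (Tf_pos f m))]
    calc Tf f m ≤ (3:ℝ)⁻¹ ^ (Sf f (m+1)) * (3/2) := Tf_le f m
      _ ≤ (3:ℝ)⁻¹ ^ (Sf (pad t) t.length + h t + 1) * (3/2) := by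
          apply mul_le_mul_of_nonneg_right _ (by norm_num)
          apply third_pow_le
          rw [Sf_succ, hlen, ← hS]
          omega
      _ < δ t := hhspec t
  refine ⟨fun m => (TreeA h m).sup h, ?_⟩
  intro f hfU m
  have h1 : f m < h (prefixList f m) := hkey f hfU m
  have h2 : h (prefixList f m) ≤ (TreeA h m).sup h :=
    Finset.le_sup (mem_TreeA (hkey f hfU) m)
  exact le_of_lt (lt_of_lt_of_le h1 h2)

abbrev II : Type := (ℵ₁ : Cardinal).ord.ToType

theorem mk_II : #II = ℵ₁ := by
  rw [Cardinal.mk_toType, Cardinal.card_ord]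

theorem countable_Iio_II (i : II) : (Set.Iio i).Countable := by
  rw [countable_iff_lt_aleph_one]
  exact Cardinal.mk_Iio_ord_toType i

theorem countable_Iic_II (i : II) : (Set.Iic i).Countable := by
  have : Set.Iic i = Set.Iio i ∪ {i} := by
    ext j; simp [le_iff_lt_or_eq]
  rw [this]
  exact (countable_Iio_II i).union (Set.countable_singleton i)

theorem chain_spec_exists (u : II → ℕ → ℕ) (i : II) (rec : ∀ j : II, j < i → (ℕ → ℕ)) :
    ∃ hb : ℕ → ℕ, (∀ j (hj : j < i), LtS (rec j hj) hb) ∧ LeS (u i) hb := by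
  have hcsub := (countable_Iio_II i).to_subtype
  have hc : (Set.range (fun j : Set.Iio i => rec j j.2) ∪ {u i}).Countable :=
    (Set.countable_range _).union (Set.countable_singleton _)
  obtain ⟨hb, hhb⟩ := countable_bound hc
  exact ⟨hb, fun j hj => hhb _ (Or.inl ⟨⟨j, hj⟩, rfl⟩), (hhb _ (Or.inr rfl)).leS⟩

noncomputable def chainC (u : II → ℕ → ℕ) : II → ℕ → ℕ :=
  WellFounded.fix wellFounded_lt fun i rec => (chain_spec_exists u i rec).choose

theorem chainC_eq (u : II → ℕ → ℕ) (i : II) :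
    chainC u i = (chain_spec_exists u i (fun j _ => chainC u j)).choose :=
  WellFounded.fix_eq _ _ _

theorem chainC_lt {u : II → ℕ → ℕ} {j i : II} (h : j < i) :
    LtS (chainC u j) (chainC u i) := by
  rw [chainC_eq u i]
  exact (chain_spec_exists u i (fun j _ => chainC u j)).choose_spec.1 j h

theorem chainC_ge (u : II → ℕ → ℕ) (i : II) : LeS (u i) (chainC u i) := by
  rw [chainC_eq u i]
  exact (chain_spec_exists u i (fun j _ => chainC u j)).choose_spec.2

theorem chainC_injective (u : II → ℕ → ℕ) : Function.Injective (chainC u) := by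
  intro i j hij
  by_contra hne
  have key : ∀ a b : II, a < b → chainC u a ≠ chainC u b := by
    intro a b hab heq
    obtain ⟨N, hN⟩ := chainC_lt (u := u) hab
    have := hN N le_rfl
    rw [heq] at this
    omega
  rcases lt_or_gt_of_ne hne with h | h
  · exact key i j h hij
  · exact key j i h hij.symm

theorem caseA (hF : ∃ F : Set (ℕ → ℕ), #F ≤ ℵ₁ ∧ ¬∃ g, ∀ f ∈ F, LeS f g) :
    ∃ X : Set ℝ, ¬ X.Countable ∧ Rothberger X := by
  classical
  obtain ⟨F, hFle, hFunb⟩ := hF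
  have hFne : F.Nonempty := by
    by_contra h
    rw [Set.not_nonempty_iff_eq_empty] at h
    exact hFunb ⟨id, by simp [h]⟩
  have hFne' : Nonempty ↥F := hFne.to_subtype
  obtain ⟨emb⟩ : Nonempty (↥F ↪ II) := by
    rw [← Cardinal.le_def, mk_II]; exact hFle
  set u : II → ℕ → ℕ := fun i => ((Function.invFun emb i : ↥F) : ℕ → ℕ) with hu_def
  have hu : ∀ g, ∃ i : II, ¬ LeS (u i) g := by
    intro g
    by_contra h
    push_neg at h
    apply hFunb
    refine ⟨g, fun f hf => ?_⟩
    obtain ⟨i, hi⟩ := Function.invFun_surjective emb.injective (⟨f, hf⟩ : ↥F)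
    have := h i
    rw [hu_def] at this
    simp only [hi] at this
    exact this
  set c := chainC u with hc_def
  set Sset := Set.range c with hSset_def
  set X := Dset ∪ ee '' Sset with hX_def
  have hslice : ∀ g : ℕ → ℕ, {f ∈ Sset | LeS f g}.Countable := by
    intro g
    obtain ⟨i0, hi0⟩ : ∃ i0, ¬ LeS (c i0) g := by
      by_contra h
      push_neg at h
      obtain ⟨i, hi⟩ := hu g
      exact hi ((chainC_ge u i).trans (h i))
    have hsub : {f ∈ Sset | LeS f g} ⊆ c '' Set.Iic i0 := by
      rintro f ⟨⟨i, rfl⟩, hle⟩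
      refine ⟨i, ?_, rfl⟩
      rw [Set.mem_Iic]
      by_contra hgt
      push_neg at hgt
      exact hi0 (((chainC_lt hgt).leS).trans hle)
    exact ((countable_Iic_II i0).image c).mono hsub
  have hXunc : ¬ X.Countable := by
    intro hc
    have h1 : (ee '' Sset).Countable := hc.mono Set.subset_union_right
    have h2 : Sset.Countable :=
      (h1.preimage ee_injective).mono (Set.subset_preimage_image ee Sset)
    have h3 : #(Set.range c) ≤ ℵ₀ := h2.le_aleph0
    rw [Cardinal.mk_range_eq c (chainC_injective u), mk_II] at h3
    exact absurd h3 (not_le.2 Cardinal.aleph0_lt_aleph_one)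
  have hzX : (0:ℝ) ∈ X := Or.inl zero_mem_Dset
  have hXroth : Rothberger X := by
    intro 𝒰 h𝒰
    obtain ⟨d, hd⟩ := Dset_countable.exists_eq_range ⟨0, zero_mem_Dset⟩
    have hdX : ∀ k, d k ∈ X := fun k => Or.inl (hd ▸ Set.mem_range_self k)
    have hV : ∀ k : ℕ, ∃ V, V ∈ 𝒰 (2*k) ∧ d k ∈ V := by
      intro k
      obtain ⟨V, hV1, hV2⟩ := (h𝒰 (2*k)).2 (hdX k)
      exact ⟨V, hV1, hV2⟩
    choose V hVmem hVd using hV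
    set W := ⋃ k, V k with hW_def
    have hWopen : IsOpen W := isOpen_iUnion fun k => (h𝒰 (2*k)).1 _ (hVmem k)
    have hDW : Dset ⊆ W := by
      rw [hd]; rintro x ⟨k, rfl⟩; exact Set.mem_iUnion.2 ⟨k, hVd k⟩
    obtain ⟨g, hg⟩ := conc hWopen hDW
    have hXWc : (X \ W).Countable := by
      have hsub : X \ W ⊆ ee '' {f ∈ Sset | LeS f g} := by
        rintro x ⟨hx, hxW⟩
        rcases hx with hx | ⟨f, hf, rfl⟩
        · exact absurd (hDW hx) hxW
        · exact ⟨f, ⟨hf, ⟨0, fun n _ => hg f hxW n⟩⟩, rfl⟩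
      exact (((hslice g)).image ee).mono hsub
    have hdef : ∀ n, ∃ V, V ∈ 𝒰 n := by
      intro n
      obtain ⟨V, hV1, _⟩ := (h𝒰 n).2 hzX
      exact ⟨V, hV1⟩
    have hWsel : ∃ Ws : ℕ → Set ℝ, (∀ j, Ws j ∈ 𝒰 (2*j+1)) ∧
        ∀ x ∈ X \ W, ∃ j, x ∈ Ws j := by
      rcases (X \ W).eq_empty_or_nonempty with hXW | hXW
      · refine ⟨fun j => (hdef (2*j+1)).choose, fun j => (hdef (2*j+1)).choose_spec, ?_⟩
        intro x hx
        rw [hXW] at hx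
        exact absurd hx (Set.notMem_empty x)
      · obtain ⟨xe, hxe⟩ := hXWc.exists_eq_range hXW
        have hsel : ∀ j : ℕ, ∃ Vj, Vj ∈ 𝒰 (2*j+1) ∧ xe j ∈ Vj := by
          intro j
          have hxj : xe j ∈ X := by
            have : xe j ∈ X \ W := hxe ▸ Set.mem_range_self j
            exact this.1
          obtain ⟨Vj, h1, h2⟩ := (h𝒰 (2*j+1)).2 hxj
          exact ⟨Vj, h1, h2⟩
        choose Ws h1 h2 using hsel
        refine ⟨Ws, h1, ?_⟩
        intro x hx
        rw [hxe] at hx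
        obtain ⟨j, rfl⟩ := hx
        exact ⟨j, h2 j⟩
    obtain ⟨Ws, hWs1, hWs2⟩ := hWsel
    refine ⟨fun n => if n % 2 = 0 then V (n/2) else Ws (n/2), ?_, ?_⟩
    · intro n
      show (if n % 2 = 0 then V (n/2) else Ws (n/2)) ∈ 𝒰 n
      by_cases hn : n % 2 = 0
      · rw [if_pos hn]
        have h2 : 2 * (n/2) = n := by omega
        have := hVmem (n/2)
        rwa [h2] at this
      · rw [if_neg hn]
        have h2 : 2 * (n/2) + 1 = n := by omega
        have := hWs1 (n/2)
        rwa [h2] at this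
    · intro x hx
      by_cases hxW : x ∈ W
      · obtain ⟨k, hk⟩ : ∃ k, x ∈ V k := Set.mem_iUnion.1 hxW
        refine Set.mem_iUnion.2 ⟨2*k, ?_⟩
        show x ∈ (if (2*k) % 2 = 0 then V ((2*k)/2) else Ws ((2*k)/2))
        rw [if_pos (by omega : (2*k) % 2 = 0)]
        have h2 : (2*k)/2 = k := by omega
        rw [h2]; exact hk
      · obtain ⟨j, hj⟩ := hWs2 x ⟨hx, hxW⟩
        refine Set.mem_iUnion.2 ⟨2*j+1, ?_⟩
        show x ∈ (if (2*j+1) % 2 = 0 then V ((2*j+1)/2) else Ws ((2*j+1)/2))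
        rw [if_neg (by omega : ¬ (2*j+1) % 2 = 0)]
        have h2 : (2*j+1)/2 = j := by omega
        rw [h2]; exact hj
  exact ⟨X, hXunc, hXroth⟩

theorem SMZ_mono {X Y : Set ℝ} (h : Y ⊆ X) (hX : SMZ X) : SMZ Y := by
  intro ε hε
  obtain ⟨I, hI1, hI2⟩ := hX ε hε
  exact ⟨I, hI1, h.trans hI2⟩

theorem rothberger_implies_smz {X : Set ℝ} (h : Rothberger X) : SMZ X := by
  intro ε hε
  have hcov : ∀ n, (∀ U ∈ {V | ∃ a b : ℝ, V = Set.Ioo a b ∧ b - a < ε n}, IsOpen U) ∧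
      X ⊆ ⋃₀ {V | ∃ a b : ℝ, V = Set.Ioo a b ∧ b - a < ε n} := by
    intro n
    constructor
    · rintro V ⟨a, b, rfl, _⟩
      exact isOpen_Ioo
    · intro x _
      have h3 : (0:ℝ) < ε n := hε n
      refine ⟨Set.Ioo (x - ε n / 3) (x + ε n / 3), ⟨_, _, rfl, by linarith⟩, ?_⟩
      rw [Set.mem_Ioo]
      constructor <;> linarith
  obtain ⟨U, hU1, hU2⟩ := h (fun n => {V | ∃ a b : ℝ, V = Set.Ioo a b ∧ b - a < ε n}) hcov
  exact ⟨U, fun n => hU1 n, hU2⟩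

theorem caseB (hb : ∀ F : Set (ℕ → ℕ), #F ≤ ℵ₁ → ∃ g, ∀ f ∈ F, LeS f g)
    {Y : Set ℝ} (hY : SMZ Y) (hYc : #Y ≤ ℵ₁) (hYne : Y.Nonempty) : Rothberger Y := by
  classical
  intro 𝒰 h𝒰
  have hsel : ∀ (y : ↥Y) (n : ℕ), ∃ k : ℕ, 1 ≤ k ∧
      ∃ V ∈ 𝒰 n, Metric.ball (y:ℝ) (1/(k:ℝ)) ⊆ V := by
    intro y n
    obtain ⟨V, hV, hyV⟩ := (h𝒰 n).2 y.2
    obtain ⟨δ, hδ, hball⟩ := Metric.isOpen_iff.1 ((h𝒰 n).1 V hV) y hyV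
    obtain ⟨k, hk⟩ := exists_nat_one_div_lt hδ
    refine ⟨k+1, by omega, V, hV, subset_trans (Metric.ball_subset_ball ?_) hball⟩
    push_cast
    exact hk.le
  choose fk hfk1 fV hfV using hsel
  obtain ⟨g, hg⟩ := hb (Set.range (fun y : ↥Y => fk y)) (Cardinal.mk_range_le.trans hYc)
  have hpos : ∀ j i : ℕ, (0:ℝ) < 1 / ((g (Nat.pair j i) : ℝ) + 1) := by
    intro j i
    positivity
  have hJ : ∀ j : ℕ, ∃ I : ℕ → Set ℝ,
      (∀ i, ∃ a b : ℝ, I i = Set.Ioo a b ∧ b - a < 1 / ((g (Nat.pair j i) : ℝ) + 1)) ∧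
      Y ⊆ ⋃ i, I i :=
    fun j => hY (fun i => 1 / ((g (Nat.pair j i) : ℝ) + 1)) (fun i => hpos j i)
  choose J hJshape hJcover using hJ
  set I : ℕ → Set ℝ := fun n => J n.unpair.1 n.unpair.2 with hI_def
  have hIshape : ∀ n, ∃ a b : ℝ, I n = Set.Ioo a b ∧ b - a < 1 / ((g n : ℝ) + 1) := by
    intro n
    have := hJshape n.unpair.1 n.unpair.2
    rwa [Nat.pair_unpair] at this
  have hIcover : ∀ y ∈ Y, ∀ N : ℕ, ∃ n ≥ N, y ∈ I n := by
    intro y hy N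
    obtain ⟨i, hi⟩ := Set.mem_iUnion.1 (hJcover N hy)
    refine ⟨Nat.pair N i, Nat.left_le_pair N i, ?_⟩
    show y ∈ J (Nat.pair N i).unpair.1 (Nat.pair N i).unpair.2
    rw [Nat.unpair_pair]
    exact hi
  have hUex : ∀ n, ∃ V, V ∈ 𝒰 n ∧ ((∃ V' ∈ 𝒰 n, I n ⊆ V') → I n ⊆ V) := by
    intro n
    by_cases h : ∃ V' ∈ 𝒰 n, I n ⊆ V'
    · obtain ⟨V, hV1, hV2⟩ := h
      exact ⟨V, hV1, fun _ => hV2⟩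
    · obtain ⟨y, hy⟩ := hYne
      obtain ⟨V, hV, _⟩ := (h𝒰 n).2 hy
      exact ⟨V, hV, fun hc => absurd hc h⟩
  choose U hUmem hUsub using hUex
  refine ⟨U, hUmem, ?_⟩
  intro y hy
  obtain ⟨N, hN⟩ := hg (fk ⟨y, hy⟩) ⟨⟨y, hy⟩, rfl⟩
  obtain ⟨n, hnN, hyI⟩ := hIcover y hy N
  obtain ⟨a, b, hIe, hlen⟩ := hIshape n
  have hk1 : 1 ≤ fk ⟨y, hy⟩ n := hfk1 _ n
  have hkg : fk ⟨y, hy⟩ n ≤ g n := hN n hnN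
  have hsub2 : I n ⊆ Metric.ball y (1 / ((fk ⟨y, hy⟩ n : ℝ))) := by
    rw [hIe]
    rw [hIe] at hyI
    intro z hz
    rw [Metric.mem_ball, Real.dist_eq]
    have h2 : (1:ℝ) / ((g n : ℝ) + 1) ≤ 1 / ((fk ⟨y,hy⟩ n : ℝ)) := by
      apply one_div_le_one_div_of_le
      · exact_mod_cast hk1
      · exact_mod_cast (by omega : fk ⟨y,hy⟩ n ≤ g n + 1)
    have h3 : |z - y| < b - a := by
      rw [abs_lt]
      constructor <;> [linarith [hz.1, hz.2, hyI.1, hyI.2]; linarith [hz.1, hz.2, hyI.1, hyI.2]]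
    linarith
  have hfinal : I n ⊆ U n :=
    hUsub n ⟨fV ⟨y,hy⟩ n, (hfV ⟨y,hy⟩ n).1, hsub2.trans (hfV ⟨y,hy⟩ n).2⟩
  exact Set.mem_iUnion.2 ⟨n, hfinal hyI⟩

/-- The Borel conjecture for strong measure zero sets is equivalent to the Borel
conjecture for Rothberger sets. -/
theorem stmt9 :
    (∀ X : Set ℝ, SMZ X → X.Countable) ↔ (∀ X : Set ℝ, Rothberger X → X.Countable) := by
  constructor
  · intro hs X hX
    exact hs X (rothberger_implies_smz hX)
  · intro hr X hX
    by_cases hb : ∀ F : Set (ℕ → ℕ), #F ≤ ℵ₁ → ∃ g, ∀ f ∈ F, LeS f g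
    · by_contra hXc
      have h1 : ℵ₁ ≤ #X := by
        rw [← Cardinal.succ_aleph0, Order.succ_le_iff]
        by_contra h
        push_neg at h
        exact hXc (Cardinal.le_aleph0_iff_set_countable.1 h)
      obtain ⟨Y, hYsub, hYcard⟩ := Cardinal.le_mk_iff_exists_subset.1 h1
      have hYne : Y.Nonempty := by
        rw [Set.nonempty_iff_ne_empty]
        rintro rfl
        rw [Cardinal.mk_emptyCollection] at hYcard
        exact absurd hYcard.symm (ne_of_gt (lt_trans Cardinal.aleph0_pos Cardinal.aleph0_lt_aleph_one))
      have hYroth : Rothberger Y := caseB hb (SMZ_mono hYsub hX) (le_of_eq hYcard) hYne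
      have hYcount := hr Y hYroth
      rw [← Cardinal.le_aleph0_iff_set_countable, hYcard] at hYcount
      exact absurd hYcount (not_le.2 Cardinal.aleph0_lt_aleph_one)
    · push_neg at hb
      obtain ⟨F, hF1, hF2⟩ := hb
      have hF2' : ¬∃ g, ∀ f ∈ F, LeS f g := by
        rintro ⟨g, hgg⟩
        obtain ⟨f, hf, hn⟩ := hF2 g
        exact hn (hgg f hf)
      obtain ⟨Z, hZ1, hZ2⟩ := caseA ⟨F, hF1, hF2'⟩
      exact absurd (hr Z hZ2) hZ1
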